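/- Let 0 < p < 1 and let K ⊆ ℝ^n be a p-convex body with conv(K) ⊆ B_2^n. Then d_1(K, B_2^n) ≤ C(p) · d_1(conv(K), B_2^n)^{2/p − 1}, where C(p) = (2^{1−p} + (1−p)2^{1−p/2}/p)^{(2−p)/p^2} · (1/((1−p) log 2))^{(2−2p)/p^2} and for K ⊆ B, d_1(K,B) := inf{λ > 0 : (1/λ)B ⊆ K ⊆ B}. -/

import Mathlib

open scoped Pointwise
open scoped RealInnerProductSpace

/-- `d₁(K, B) = inf {λ > 0 : (1/λ) B ⊆ K ⊆ B}`, for `K ⊆ B`. -/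
noncomputable def d1 {n : ℕ} (K B : Set (EuclideanSpace ℝ (Fin n))) : ℝ :=
  sInf {l : ℝ | 0 < l ∧ l⁻¹ • B ⊆ K ∧ K ⊆ B}

section Aux
variable {E : Type*} [AddCommGroup E] [Module ℝ E]

variable {E : Type*} [AddCommGroup E] [Module ℝ E]

lemma pc2 {K : Set E} {p : ℝ} (hp0 : 0 < p)
    (hstar : ∀ x ∈ K, ∀ t : ℝ, t ∈ Set.Icc (0 : ℝ) 1 → t • x ∈ K)
    (hpconv : ∀ x ∈ K, ∀ y ∈ K, ∀ l m : ℝ, l ∈ Set.Icc (0 : ℝ) 1 → m ∈ Set.Icc (0 : ℝ) 1 →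
      l ^ p + m ^ p = 1 → l • x + m • y ∈ K)
    {x y : E} (hx : x ∈ K) (hy : y ∈ K) {l m : ℝ} (hl : 0 ≤ l) (hm : 0 ≤ m)
    (hlm : l ^ p + m ^ p ≤ 1) : l • x + m • y ∈ K := by
  have hlp : (0:ℝ) ≤ l ^ p := Real.rpow_nonneg hl p
  have hmp : (0:ℝ) ≤ m ^ p := Real.rpow_nonneg hm p
  rcases eq_or_lt_of_le (by positivity : (0:ℝ) ≤ l ^ p + m ^ p) with h0 | hpos
  · -- both zero
    have hl0 : l = 0 := by
      have : l ^ p = 0 := by linarith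
      exact ((Real.rpow_eq_zero hl hp0.ne').mp this)
    have hm0 : m = 0 := by
      have : m ^ p = 0 := by linarith
      exact ((Real.rpow_eq_zero hm hp0.ne').mp this)
    have : (0:E) ∈ K := by
      have := hstar x hx 0 ⟨le_refl 0, zero_le_one⟩
      simpa using this
    simpa [hl0, hm0] using this
  · set s := l ^ p + m ^ p with hs
    have hs1 : s ≤ 1 := hlm
    set c := s ^ (p⁻¹ : ℝ) with hc
    have hcpos : 0 < c := Real.rpow_pos_of_pos hpos _
    have hcp : c ^ p = s := Real.rpow_inv_rpow hpos.le hp0.ne'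
    have hc1 : c ≤ 1 := Real.rpow_le_one hpos.le hs1 (by positivity)
    have hlc : l ≤ c := by
      rw [← Real.rpow_le_rpow_iff hl hcpos.le hp0, hcp]; linarith
    have hmc : m ≤ c := by
      rw [← Real.rpow_le_rpow_iff hm hcpos.le hp0, hcp]; linarith
    have hmem := hpconv x hx y hy (l / c) (m / c)
      ⟨by positivity, by rw [div_le_one hcpos]; exact hlc⟩
      ⟨by positivity, by rw [div_le_one hcpos]; exact hmc⟩
      (by rw [Real.div_rpow hl hcpos.le, Real.div_rpow hm hcpos.le, hcp,
            ← add_div, div_self hpos.ne'])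
    have := hstar _ hmem c ⟨hcpos.le, hc1⟩
    simpa [smul_add, smul_smul, mul_div_cancel₀ _ hcpos.ne'] using this

lemma pcombN {K : Set E} {p : ℝ} (hp0 : 0 < p)
    (h0K : (0:E) ∈ K)
    (hstar : ∀ x ∈ K, ∀ t : ℝ, t ∈ Set.Icc (0 : ℝ) 1 → t • x ∈ K)
    (hpconv : ∀ x ∈ K, ∀ y ∈ K, ∀ l m : ℝ, l ∈ Set.Icc (0 : ℝ) 1 → m ∈ Set.Icc (0 : ℝ) 1 →
      l ^ p + m ^ p = 1 → l • x + m • y ∈ K)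
    {ι : Type*} (s : Finset ι) (w : ι → ℝ) (f : ι → E)
    (hf : ∀ i ∈ s, f i ∈ K) (hw : ∀ i ∈ s, 0 ≤ w i)
    (hsum : ∑ i ∈ s, w i ^ p ≤ 1) : (∑ i ∈ s, w i • f i) ∈ K := by
  induction s using Finset.cons_induction generalizing w with
  | empty => simpa using h0K
  | cons i₀ s hi IH =>
    rw [Finset.sum_cons]
    rw [Finset.sum_cons] at hsum
    have hw0 : ∀ i ∈ s, 0 ≤ w i := fun i hi' => hw i (Finset.mem_cons_of_mem hi')
    have hwnn : (0:ℝ) ≤ ∑ i ∈ s, w i ^ p :=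
      Finset.sum_nonneg fun i hi' => Real.rpow_nonneg (hw0 i hi') p
    have hw₀ : 0 ≤ w i₀ := hw i₀ (Finset.mem_cons_self _ _)
    have hw₀p : (0:ℝ) ≤ w i₀ ^ p := Real.rpow_nonneg hw₀ p
    rcases eq_or_lt_of_le hwnn with hz | hpos
    · have hz' : ∀ i ∈ s, w i • f i = 0 := by
        intro i hi'
        have : w i ^ p = 0 := by
          have := Finset.sum_nonneg (fun j hj => Real.rpow_nonneg (hw0 j hj) p)
          have hle := Finset.single_le_sum (fun j hj => Real.rpow_nonneg (hw0 j hj) p) hi'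
          rw [← hz] at hle
          linarith [Real.rpow_nonneg (hw0 i hi') p]
        have : w i = 0 := (Real.rpow_eq_zero (hw0 i hi') hp0.ne').mp this
        simp [this]
      rw [Finset.sum_eq_zero hz', add_zero]
      have hw₀1 : w i₀ ≤ 1 := by
        by_contra hgt
        push_neg at hgt
        have : (1:ℝ) < w i₀ ^ p := by
          rw [Real.one_lt_rpow_iff (by linarith)]
          exact Or.inl ⟨hgt, hp0⟩
        linarith
      exact hstar _ (hf i₀ (Finset.mem_cons_self _ _)) _ ⟨hw₀, hw₀1⟩
    · set t := (∑ i ∈ s, w i ^ p) ^ (p⁻¹ : ℝ) with ht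
      have htpos : 0 < t := Real.rpow_pos_of_pos hpos _
      have htp : t ^ p = ∑ i ∈ s, w i ^ p := Real.rpow_inv_rpow hpos.le hp0.ne'
      have hy : (∑ i ∈ s, (w i / t) • f i) ∈ K := by
        apply IH (fun i => w i / t) (fun i hi' => hf i (Finset.mem_cons_of_mem hi')) (fun i hi' => by
          have := hw0 i hi'; positivity)
        have : ∑ i ∈ s, (w i / t) ^ p = (∑ i ∈ s, w i ^ p) / t ^ p := by
          rw [Finset.sum_div]
          exact Finset.sum_congr rfl fun i hi' => Real.div_rpow (hw0 i hi') htpos.le p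
        rw [this, htp, div_self hpos.ne']
      have hrw : (∑ i ∈ s, w i • f i) = t • ∑ i ∈ s, (w i / t) • f i := by
        rw [Finset.smul_sum]
        exact Finset.sum_congr rfl fun i hi' => by
          rw [smul_smul, mul_div_cancel₀ _ htpos.ne']
      rw [hrw]
      exact pc2 hp0 hstar hpconv (hf i₀ (Finset.mem_cons_self _ _)) hy hw₀
        htpos.le (by rw [htp]; exact hsum)

end Aux

section Aux2
variable {E : Type*} [NormedAddCommGroup E] [InnerProductSpace ℝ E]

variable {E : Type*} [NormedAddCommGroup E] [InnerProductSpace ℝ E]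

lemma sel {K : Set E} {x : E} (hx : x ∈ convexHull ℝ K) (v : E) :
    ∃ y ∈ K, ⟪y - x, v⟫ ≤ 0 := by
  rw [convexHull_eq] at hx
  obtain ⟨ι, t, w, z, hw0, hw1, hz, hcm⟩ := hx
  have hxeq : ∑ i ∈ t, w i • z i = x := by
    rw [← Finset.centerMass_eq_of_sum_1 t z hw1]; exact hcm
  by_contra hcon
  push_neg at hcon
  have hsum : ∑ i ∈ t, w i * ⟪z i - x, v⟫ = 0 := by
    have hterm : ∀ i ∈ t, w i * ⟪z i - x, v⟫ = ⟪w i • z i, v⟫ - w i * ⟪x, v⟫ := by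
      intro i hi
      rw [inner_sub_left, real_inner_smul_left]
      ring
    rw [Finset.sum_congr rfl hterm, Finset.sum_sub_distrib, ← sum_inner, hxeq,
      ← Finset.sum_mul, hw1, one_mul, sub_self]
  have hpos : 0 < ∑ i ∈ t, w i * ⟪z i - x, v⟫ := by
    obtain ⟨i₀, hi₀, hwi₀⟩ : ∃ i ∈ t, 0 < w i := by
      by_contra hall
      push_neg at hall
      have : ∑ i ∈ t, w i ≤ 0 := Finset.sum_nonpos fun i hi => hall i hi
      rw [hw1] at this; linarith
    apply Finset.sum_pos'
    · intro i hi
      exact mul_nonneg (hw0 i hi) (lt_of_lt_of_le (hcon _ (hz i hi)) le_rfl).le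
    · exact ⟨i₀, hi₀, mul_pos hwi₀ (hcon _ (hz i₀ hi₀))⟩
  linarith

lemma greedy {K : Set E} (hK1 : K ⊆ Metric.closedBall 0 1) {x : E}
    (hx : x ∈ convexHull ℝ K) :
    ∀ N : ℕ, ∃ f : Fin (N + 1) → E, (∀ i, f i ∈ K) ∧
      ‖((N + 1 : ℕ) : ℝ)⁻¹ • (∑ i, f i) - x‖ ^ 2 ≤ 4 / ((N + 1 : ℕ) : ℝ) := by
  have hxB : ‖x‖ ≤ 1 := by
    have := convexHull_min hK1 (convex_closedBall (0:E) 1) hx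
    simpa [Metric.mem_closedBall] using this
  have hdist : ∀ y ∈ K, ‖y - x‖ ≤ 2 := fun y hy => by
    have hy1 : ‖y‖ ≤ 1 := by simpa [Metric.mem_closedBall] using hK1 hy
    calc ‖y - x‖ ≤ ‖y‖ + ‖x‖ := norm_sub_le y x
    _ ≤ 2 := by linarith
  intro N
  induction N with
  | zero =>
    obtain ⟨y₀, hy₀⟩ := convexHull_nonempty_iff.mp ⟨x, hx⟩
    refine ⟨fun _ => y₀, fun _ => hy₀, ?_⟩
    have : ‖y₀ - x‖ ≤ 2 := hdist y₀ hy₀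
    have h2 : ‖y₀ - x‖ ^ 2 ≤ 4 := by nlinarith [norm_nonneg (y₀ - x)]
    simpa using h2
  | succ N IH =>
    obtain ⟨f, hf, hbound⟩ := IH
    set n1 : ℝ := ((N + 1 : ℕ) : ℝ) with hn1
    have hn1pos : (0:ℝ) < n1 := by positivity
    set z : E := n1⁻¹ • (∑ i, f i) with hz
    obtain ⟨y, hyK, hyip⟩ := sel hx (z - x)
    refine ⟨Fin.snoc f y, ?_, ?_⟩
    · intro i
      induction i using Fin.lastCases with
      | last => simpa using hyK
      | cast j => simpa using hf j
    · have hsum : (∑ i, Fin.snoc f y i) = (∑ i, f i) + y := Fin.sum_snoc y f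
      set n2 : ℝ := ((N + 1 + 1 : ℕ) : ℝ) with hn2
      have hn2pos : (0:ℝ) < n2 := by positivity
      have h1 : n1 • z = ∑ i, f i := by
        rw [hz, smul_smul, mul_inv_cancel₀ hn1pos.ne', one_smul]
      have hn21 : n2 = n1 + 1 := by rw [hn1, hn2]; push_cast; ring
      have hne : n1 + 1 ≠ 0 := by positivity
      have hkey : n2⁻¹ • (∑ i, Fin.snoc f y i) - x
          = n2⁻¹ • (n1 • (z - x) + (y - x)) := by
        rw [hsum, ← h1, hn21]
        match_scalars <;> field_simp <;> ring
      rw [hkey]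
      rw [norm_smul, mul_pow]
      have hnorm : ‖n1 • (z - x) + (y - x)‖ ^ 2
          = n1 ^ 2 * ‖z - x‖ ^ 2 + 2 * (n1 * ⟪z - x, y - x⟫) + ‖y - x‖ ^ 2 := by
        rw [norm_add_sq_real, norm_smul, inner_smul_left]
        simp only [Real.norm_eq_abs, abs_of_pos hn1pos, mul_pow, RCLike.conj_to_real]
        try ring
      have hip2 : ⟪z - x, y - x⟫ ≤ 0 := by
        rw [real_inner_comm]; exact hyip
      have hz2 : ‖z - x‖ ^ 2 ≤ 4 / n1 := hbound
      have hy2 : ‖y - x‖ ^ 2 ≤ 4 := by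
        have := hdist y hyK; nlinarith [norm_nonneg (y - x)]
      have : ‖n1 • (z - x) + (y - x)‖ ^ 2 ≤ 4 * n1 + 4 := by
        rw [hnorm]
        have h1 : n1 ^ 2 * ‖z - x‖ ^ 2 ≤ n1 ^ 2 * (4 / n1) := by
          apply mul_le_mul_of_nonneg_left hz2 (by positivity)
        have h2 : n1 ^ 2 * (4 / n1) = 4 * n1 := by field_simp
        nlinarith [mul_nonneg hn1pos.le (neg_nonneg.mpr hip2)]
      calc ‖(n2:ℝ)⁻¹‖ ^ 2 * ‖n1 • (z - x) + (y - x)‖ ^ 2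
          ≤ (n2⁻¹) ^ 2 * (4 * n1 + 4) := by
            rw [Real.norm_eq_abs, abs_of_pos (by positivity : (0:ℝ) < n2⁻¹)]
            apply mul_le_mul_of_nonneg_left this (by positivity)
        _ = 4 / n2 := by rw [hn21]; field_simp

end Aux2

lemma final_numeric (p a D : ℝ) (hp0 : 0 < p) (hp1 : p < 1) (ha0 : 0 < a)
    (hD : 1 ≤ D)
    (h : ((2 ^ (1-p) + (1-p) * 2 ^ (1-p/2) / p) *
        ((a ^ (-p) * (1 / ((1-p) * Real.log 2))) ^ ((2:ℝ)/(2-p))) ^ (1-p)) ^ (-(1:ℝ)/p)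
      ≤ a * D) :
    a⁻¹ ≤ (2 ^ (1 - p) + (1 - p) * 2 ^ (1 - p / 2) / p) ^ ((2 - p) / p ^ 2) *
        (1 / ((1 - p) * Real.log 2)) ^ ((2 - 2 * p) / p ^ 2) * D ^ (2 / p - 1) := by
  have hlog2 : 0 < Real.log 2 := Real.log_pos one_lt_two
  set L : ℝ := 1 / ((1-p) * Real.log 2) with hLdef
  set Ap : ℝ := 2 ^ (1-p) + (1-p) * 2 ^ (1-p/2) / p with hApdef
  have hL0 : 0 < L := by
    rw [hLdef]; exact div_pos one_pos (mul_pos (by linarith) hlog2)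
  have hAp0 : 0 < Ap := by
    rw [hApdef]
    have h1 : (0:ℝ) < 2 ^ (1-p) := Real.rpow_pos_of_pos two_pos _
    have h2 : (0:ℝ) ≤ (1-p) * 2 ^ (1-p/2) / p :=
      div_nonneg (mul_nonneg (by linarith) (Real.rpow_nonneg two_pos.le _)) hp0.le
    linarith
  set M : ℝ := (a ^ (-p) * L) ^ ((2:ℝ)/(2-p)) with hMdef
  have hab : 0 < a ^ (-p) * L := mul_pos (Real.rpow_pos_of_pos ha0 _) hL0
  have hM0 : 0 < M := by rw [hMdef]; exact Real.rpow_pos_of_pos hab _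
  set X : ℝ := Ap * M ^ (1-p) with hXdef
  have hX0 : 0 < X := by
    rw [hXdef]; exact mul_pos hAp0 (Real.rpow_pos_of_pos hM0 _)
  have h2p : (0:ℝ) < 2 - p := by linarith
  have hD0 : (0:ℝ) < D := lt_of_lt_of_le one_pos hD
  -- raise h to the power p*(2-p)
  have h1 : (X ^ (-(1:ℝ)/p)) ^ (p*(2-p)) ≤ (a*D) ^ (p*(2-p)) :=
    Real.rpow_le_rpow (Real.rpow_nonneg hX0.le _) h (by positivity)
  have e1 : (X ^ (-(1:ℝ)/p)) ^ (p*(2-p)) = X ^ (-(2-p)) := by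
    rw [← Real.rpow_mul hX0.le]
    have : -(1:ℝ)/p * (p*(2-p)) = -(2-p) := by field_simp
    rw [this]
  have e2 : (a*D) ^ (p*(2-p)) = a ^ (p*(2-p)) * D ^ (p*(2-p)) :=
    Real.mul_rpow ha0.le hD0.le
  rw [e1, e2] at h1
  -- multiply both sides by X^(2-p)
  have h2 : 1 ≤ a ^ (p*(2-p)) * D ^ (p*(2-p)) * X ^ (2-p) := by
    have := mul_le_mul_of_nonneg_right h1 (Real.rpow_nonneg hX0.le (2-p))
    calc (1:ℝ) = X ^ (-(2-p)) * X ^ (2-p) := by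
          rw [← Real.rpow_add hX0, neg_add_cancel, Real.rpow_zero]
      _ ≤ a ^ (p*(2-p)) * D ^ (p*(2-p)) * X ^ (2-p) := this
  -- expand X^(2-p)
  have e3 : X ^ (2-p) = Ap ^ (2-p) * (a ^ (-(p*(2-2*p))) * L ^ (2-2*p)) := by
    rw [hXdef, Real.mul_rpow hAp0.le (Real.rpow_nonneg hM0.le _)]
    congr 1
    rw [hMdef, ← Real.rpow_mul hab.le, ← Real.rpow_mul hab.le]
    have : (2:ℝ)/(2-p) * (1-p) * (2-p) = 2-2*p := by field_simp
    rw [this, Real.mul_rpow (by positivity : (0:ℝ) ≤ a ^ (-p)) hL0.le,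
      ← Real.rpow_mul ha0.le]
    congr 2
    ring
  rw [e3] at h2
  -- combine powers of a
  have h3 : 1 ≤ a ^ (p^2) * (Ap ^ (2-p) * L ^ (2-2*p) * D ^ (p*(2-p))) := by
    have ea : a ^ (p*(2-p)) * a ^ (-(p*(2-2*p))) = a ^ (p^2) := by
      rw [← Real.rpow_add ha0]; congr 1; ring
    calc (1:ℝ) ≤ a ^ (p*(2-p)) * D ^ (p*(2-p)) *
          (Ap ^ (2-p) * (a ^ (-(p*(2-2*p))) * L ^ (2-2*p))) := h2
      _ = (a ^ (p*(2-p)) * a ^ (-(p*(2-2*p)))) *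
          (Ap ^ (2-p) * L ^ (2-2*p) * D ^ (p*(2-p))) := by ring
      _ = a ^ (p^2) * (Ap ^ (2-p) * L ^ (2-2*p) * D ^ (p*(2-p))) := by rw [ea]
  -- so a^(-p^2) ≤ RHS-core
  have h4 : a ^ (-(p^2:ℝ)) ≤ Ap ^ (2-p) * L ^ (2-2*p) * D ^ (p*(2-p)) := by
    have hm := mul_le_mul_of_nonneg_left h3 (Real.rpow_nonneg ha0.le (-(p^2:ℝ)))
    calc a ^ (-(p^2:ℝ)) = a ^ (-(p^2:ℝ)) * 1 := (mul_one _).symm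
      _ ≤ a ^ (-(p^2:ℝ)) * (a ^ (p^2:ℝ) * (Ap ^ (2-p) * L ^ (2-2*p) * D ^ (p*(2-p)))) := hm
      _ = (a ^ (-(p^2:ℝ)) * a ^ (p^2:ℝ)) * (Ap ^ (2-p) * L ^ (2-2*p) * D ^ (p*(2-p))) := by ring
      _ = Ap ^ (2-p) * L ^ (2-2*p) * D ^ (p*(2-p)) := by
          rw [← Real.rpow_add ha0, neg_add_cancel, Real.rpow_zero, one_mul]
  -- raise to power 1/p^2
  have hp2 : (0:ℝ) < p^2 := by positivity
  have h5 := Real.rpow_le_rpow (Real.rpow_nonneg ha0.le _) h4 (by positivity : (0:ℝ) ≤ 1/p^2)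
  have e5 : (a ^ (-(p^2:ℝ))) ^ ((1:ℝ)/p^2) = a⁻¹ := by
    rw [← Real.rpow_mul ha0.le]
    have : -(p^2:ℝ) * (1/p^2) = -1 := by field_simp
    rw [this, Real.rpow_neg_one]
  have e6 : (Ap ^ (2-p) * L ^ (2-2*p) * D ^ (p*(2-p))) ^ ((1:ℝ)/p^2)
      = Ap ^ ((2-p)/p^2) * L ^ ((2-2*p)/p^2) * D ^ (2/p-1) := by
    rw [Real.mul_rpow (by positivity) (Real.rpow_nonneg hD0.le _),
      Real.mul_rpow (Real.rpow_nonneg hAp0.le _) (Real.rpow_nonneg hL0.le _)]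
    rw [← Real.rpow_mul hAp0.le, ← Real.rpow_mul hL0.le, ← Real.rpow_mul hD0.le]
    congr 2
    · field_simp
    · field_simp
    · field_simp
  rw [e5, e6] at h5
  exact h5

set_option maxHeartbeats 1000000 in
lemma key_ineq (p a r L M Ap θ : ℝ) (N : ℕ) (hp0 : 0 < p) (hp1 : p < 1)
    (ha0 : 0 < a) (ha1 : a ≤ 1) (hr0 : 0 ≤ r)
    (hL : L = 1/((1-p)*Real.log 2)) (hM : M = (a ^ (-p) * L) ^ ((2:ℝ)/(2-p)))
    (hAp : Ap = 2 ^ (1-p) + (1-p) * 2 ^ (1-p/2) / p)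
    (hθ : θ = (Ap * M ^ (1-p)) ^ (-(1:ℝ)/p))
    (hMN : M ≤ (N:ℝ)) (hNM : (N:ℝ) ≤ 2 * M)
    (hr : r ≤ 2 * (N:ℝ) ^ (-(1:ℝ)/2)) :
    (θ * (N:ℝ) ^ ((1:ℝ)/p - 1)) ^ p + (θ * r / a) ^ p ≤ 1 := by
  have h1p : (0:ℝ) < 1 - p := by linarith
  have hlog2 : 0 < Real.log 2 := Real.log_pos one_lt_two
  have hL0 : 0 < L := by rw [hL]; exact div_pos one_pos (mul_pos h1p hlog2)
  have hAp0 : 0 < Ap := by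
    rw [hAp]
    have h1 : (0:ℝ) < 2 ^ (1-p) := Real.rpow_pos_of_pos two_pos _
    have h2 : (0:ℝ) ≤ (1-p) * 2 ^ (1-p/2) / p :=
      div_nonneg (mul_nonneg h1p.le (Real.rpow_nonneg two_pos.le _)) hp0.le
    linarith
  have hab : 0 < a ^ (-p) * L := mul_pos (Real.rpow_pos_of_pos ha0 _) hL0
  have hM0 : 0 < M := by rw [hM]; exact Real.rpow_pos_of_pos hab _
  have hX0 : 0 < Ap * M ^ (1-p) := mul_pos hAp0 (Real.rpow_pos_of_pos hM0 _)
  have hθ0 : 0 < θ := by rw [hθ]; exact Real.rpow_pos_of_pos hX0 _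
  have hN0 : (0:ℝ) < (N:ℝ) := lt_of_lt_of_le hM0 hMN
  have hap : 0 < a ^ p := Real.rpow_pos_of_pos ha0 _
  -- θ^p = X⁻¹
  have hθp : θ ^ p = (Ap * M ^ (1-p))⁻¹ := by
    rw [hθ, ← Real.rpow_mul hX0.le]
    have : -(1:ℝ)/p * p = -1 := by field_simp
    rw [this, Real.rpow_neg_one]
  -- expand first term
  have hT1 : (θ * (N:ℝ) ^ ((1:ℝ)/p - 1)) ^ p = θ ^ p * (N:ℝ) ^ (1-p) := by
    rw [Real.mul_rpow hθ0.le (Real.rpow_nonneg hN0.le _), ← Real.rpow_mul hN0.le]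
    have : ((1:ℝ)/p - 1) * p = 1 - p := by field_simp
    rw [this]
  have hT2 : (θ * r / a) ^ p = θ ^ p * (r ^ p / a ^ p) := by
    rw [Real.div_rpow (by positivity) ha0.le,
      Real.mul_rpow hθ0.le hr0, mul_div_assoc]
  -- the core inequality
  have hmain : (N:ℝ) ^ (1-p) + r ^ p / a ^ p ≤ Ap * M ^ (1-p) := by
    have t1 : (N:ℝ) ^ (1-p) ≤ 2 ^ (1-p) * M ^ (1-p) := by
      calc (N:ℝ) ^ (1-p) ≤ (2*M) ^ (1-p) :=
            Real.rpow_le_rpow hN0.le hNM h1p.le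
        _ = 2 ^ (1-p) * M ^ (1-p) := Real.mul_rpow two_pos.le hM0.le
    have hrp : r ^ p ≤ 2 ^ p * M ^ (-(1:ℝ)/2 * p) := by
      calc r ^ p ≤ (2 * (N:ℝ) ^ (-(1:ℝ)/2)) ^ p :=
            Real.rpow_le_rpow hr0 hr hp0.le
        _ = 2 ^ p * ((N:ℝ) ^ (-(1:ℝ)/2)) ^ p :=
            Real.mul_rpow two_pos.le (Real.rpow_nonneg hN0.le _)
        _ = 2 ^ p * (N:ℝ) ^ (-(1:ℝ)/2 * p) := by rw [← Real.rpow_mul hN0.le]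
        _ ≤ 2 ^ p * M ^ (-(1:ℝ)/2 * p) := by
            apply mul_le_mul_of_nonneg_left _ (Real.rpow_nonneg two_pos.le _)
            exact Real.rpow_le_rpow_of_nonpos hM0 hMN (by nlinarith)
    have hMhalf : M ^ ((2-p)/2) = a ^ (-p) * L := by
      rw [hM, ← Real.rpow_mul hab.le]
      have h2p : (0:ℝ) < 2 - p := by linarith
      have : (2:ℝ)/(2-p) * ((2-p)/2) = 1 := by
        field_simp [h2p.ne']
      rw [this, Real.rpow_one]
    -- scalar inequality 2^p * p * log 2 ≤ 2^(1-p/2)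
    have hsqrt2 : Real.sqrt 2 ≤ 1.4143 := by
      nlinarith [Real.sq_sqrt (by norm_num : (0:ℝ) ≤ 2), Real.sqrt_nonneg 2]
    have hhalf : Real.log 2 ≤ (2:ℝ) ^ (-(1:ℝ)/2) := by
      have hs2 : (0:ℝ) < Real.sqrt 2 := Real.sqrt_pos.mpr two_pos
      have he : (2:ℝ) ^ (-(1:ℝ)/2) = 1 / Real.sqrt 2 := by
        rw [eq_div_iff hs2.ne', Real.sqrt_eq_rpow, ← Real.rpow_add two_pos]
        norm_num
      rw [he, le_div_iff₀ hs2]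
      nlinarith [Real.log_two_lt_d9, Real.log_nonneg one_le_two]
    have hscalar : 2 ^ p * (p * Real.log 2) ≤ 2 ^ (1-p/2) := by
      have h1 : p * Real.log 2 ≤ Real.log 2 := by nlinarith [mul_nonneg h1p.le hlog2.le]
      have h2 : Real.log 2 ≤ (2:ℝ) ^ (1 - (3/2)*p) := by
        calc Real.log 2 ≤ (2:ℝ) ^ (-(1:ℝ)/2) := hhalf
          _ ≤ (2:ℝ) ^ (1 - (3/2)*p) :=
            Real.rpow_le_rpow_of_exponent_le one_le_two (by linarith)
      calc 2 ^ p * (p * Real.log 2) ≤ 2 ^ p * (2:ℝ) ^ (1 - (3/2)*p) := by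
            apply mul_le_mul_of_nonneg_left (le_trans h1 h2)
              (Real.rpow_nonneg two_pos.le _)
        _ = 2 ^ (1-p/2) := by
            rw [← Real.rpow_add two_pos]; congr 1; ring
    -- t2
    have t2 : r ^ p / a ^ p ≤ ((1-p) * 2 ^ (1-p/2) / p) * M ^ (1-p) := by
      have hsplit : M ^ ((1:ℝ)-p) = (a ^ (-p) * L) * M ^ (-(1:ℝ)/2 * p) := by
        rw [← hMhalf, ← Real.rpow_add hM0]
        congr 1; ring
      rw [hsplit]
      have step1 : r ^ p / a ^ p ≤ (2 ^ p / a ^ p) * M ^ (-(1:ℝ)/2 * p) := by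
        rw [div_eq_mul_inv, div_eq_mul_inv, mul_assoc]
        calc r ^ p * (a ^ p)⁻¹ ≤ (2 ^ p * M ^ (-(1:ℝ)/2 * p)) * (a ^ p)⁻¹ :=
              mul_le_mul_of_nonneg_right hrp (by positivity)
          _ = 2 ^ p * (M ^ (-(1:ℝ)/2 * p) * (a ^ p)⁻¹) := by ring
          _ = 2 ^ p * ((a ^ p)⁻¹ * M ^ (-(1:ℝ)/2 * p)) := by ring
      refine le_trans step1 ?_
      have hgoal2 : 2 ^ p / a ^ p ≤ ((1-p) * 2 ^ (1-p/2) / p) * (a ^ (-p) * L) := by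
        have hAm : a ^ (-p) = (a ^ p)⁻¹ := by
          rw [Real.rpow_neg ha0.le]
        rw [hAm]
        rw [div_eq_mul_inv]
        have hcoef : 2 ^ p ≤ ((1-p) * 2 ^ (1-p/2) / p) * L := by
          rw [hL]
          have : ((1-p) * 2 ^ (1-p/2) / p) * (1/((1-p)*Real.log 2))
              = 2 ^ (1-p/2) / (p * Real.log 2) := by
            field_simp
          rw [this, le_div_iff₀ (by positivity)]
          exact hscalar
        calc (2:ℝ) ^ p * (a ^ p)⁻¹ ≤ (((1-p) * 2 ^ (1-p/2) / p) * L) * (a ^ p)⁻¹ :=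
              mul_le_mul_of_nonneg_right hcoef (by positivity)
          _ = ((1-p) * 2 ^ (1-p/2) / p) * ((a ^ p)⁻¹ * L) := by ring
      calc (2 ^ p / a ^ p) * M ^ (-(1:ℝ)/2 * p)
          ≤ (((1-p) * 2 ^ (1-p/2) / p) * (a ^ (-p) * L)) * M ^ (-(1:ℝ)/2 * p) :=
            mul_le_mul_of_nonneg_right hgoal2 (Real.rpow_nonneg hM0.le _)
        _ = ((1-p) * 2 ^ (1-p/2) / p) * ((a ^ (-p) * L) * M ^ (-(1:ℝ)/2 * p)) := by ring
    calc (N:ℝ) ^ (1-p) + r ^ p / a ^ p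
        ≤ 2 ^ (1-p) * M ^ (1-p) + ((1-p) * 2 ^ (1-p/2) / p) * M ^ (1-p) :=
          add_le_add t1 t2
      _ = Ap * M ^ (1-p) := by rw [hAp]; ring
  -- conclude
  rw [hT1, hT2, hθp]
  have := (div_le_one hX0).mpr hmain
  calc (Ap * M ^ (1-p))⁻¹ * (N:ℝ) ^ (1-p) + (Ap * M ^ (1-p))⁻¹ * (r ^ p / a ^ p)
      = ((N:ℝ) ^ (1-p) + r ^ p / a ^ p) / (Ap * M ^ (1-p)) := by
        rw [div_eq_mul_inv]; ring
    _ ≤ 1 := this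

set_option maxHeartbeats 1600000 in
theorem pConvex_dist_to_ball {n : ℕ} (p : ℝ) (hp0 : 0 < p) (hp1 : p < 1)
    (K : Set (EuclideanSpace ℝ (Fin n)))
    (hcomp : IsCompact K)
    (h0 : (0 : EuclideanSpace ℝ (Fin n)) ∈ interior K)
    (hstar : ∀ x ∈ K, ∀ t : ℝ, t ∈ Set.Icc (0 : ℝ) 1 → t • x ∈ K)
    (hpconv : ∀ x ∈ K, ∀ y ∈ K, ∀ l m : ℝ, l ∈ Set.Icc (0 : ℝ) 1 → m ∈ Set.Icc (0 : ℝ) 1 →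
      l ^ p + m ^ p = 1 → l • x + m • y ∈ K)
    (hKB : convexHull ℝ K ⊆ Metric.closedBall (0 : EuclideanSpace ℝ (Fin n)) 1) :
    d1 K (Metric.closedBall 0 1) ≤
      ((2 ^ (1 - p) + (1 - p) * 2 ^ (1 - p / 2) / p) ^ ((2 - p) / p ^ 2) *
          (1 / ((1 - p) * Real.log 2)) ^ ((2 - 2 * p) / p ^ 2)) *
        d1 (convexHull ℝ K) (Metric.closedBall 0 1) ^ (2 / p - 1) := by
  have h0K : (0 : EuclideanSpace ℝ (Fin n)) ∈ K := interior_subset h0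
  have h1p : (0:ℝ) < 1 - p := by linarith
  have hlog2 : 0 < Real.log 2 := Real.log_pos one_lt_two
  have hRC1 : (0:ℝ) ≤ 2 ^ (1 - p) + (1 - p) * 2 ^ (1 - p / 2) / p := by
    have a1 : (0:ℝ) < 2 ^ (1-p) := Real.rpow_pos_of_pos two_pos _
    have a2 : (0:ℝ) ≤ (1-p) * 2 ^ (1-p/2) / p :=
      div_nonneg (mul_nonneg h1p.le (Real.rpow_nonneg two_pos.le _)) hp0.le
    linarith
  have hRC2 : (0:ℝ) ≤ 1 / ((1 - p) * Real.log 2) := by positivity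
  rcases Nat.eq_zero_or_pos n with hn0 | hn
  · -- trivial case: zero-dimensional space
    subst hn0
    have hsub : Subsingleton (EuclideanSpace ℝ (Fin 0)) := inferInstance
    have hset : ∀ l : ℝ, 0 < l → l ∈ {l : ℝ | 0 < l ∧
        l⁻¹ • Metric.closedBall (0 : EuclideanSpace ℝ (Fin 0)) 1 ⊆ K ∧
        K ⊆ Metric.closedBall 0 1} := by
      intro l hl
      refine ⟨hl, ?_, ?_⟩
      · intro x hx
        have : x = 0 := Subsingleton.elim x 0
        rw [this]; exact h0K
      · intro x hx
        have : x = 0 := Subsingleton.elim x 0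
        rw [this]; exact Metric.mem_closedBall_self zero_le_one
    have hbdd : BddBelow {l : ℝ | 0 < l ∧
        l⁻¹ • Metric.closedBall (0 : EuclideanSpace ℝ (Fin 0)) 1 ⊆ K ∧
        K ⊆ Metric.closedBall 0 1} := ⟨0, fun l hl => hl.1.le⟩
    have hle0 : d1 K (Metric.closedBall 0 1) ≤ 0 := by
      by_contra hpos
      push_neg at hpos
      have hmem := hset (d1 K (Metric.closedBall 0 1) / 2) (by linarith)
      have := csInf_le hbdd hmem
      have : d1 K (Metric.closedBall 0 1) ≤ d1 K (Metric.closedBall 0 1) / 2 := this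
      linarith
    have hconv0 : (0:ℝ) ≤ d1 (convexHull ℝ K) (Metric.closedBall 0 1) :=
      Real.sInf_nonneg fun l hl => hl.1.le
    have hR : (0:ℝ) ≤ ((2 ^ (1 - p) + (1 - p) * 2 ^ (1 - p / 2) / p) ^ ((2 - p) / p ^ 2) *
          (1 / ((1 - p) * Real.log 2)) ^ ((2 - 2 * p) / p ^ 2) ) *
        d1 (convexHull ℝ K) (Metric.closedBall 0 1) ^ (2 / p - 1) :=
      mul_nonneg (mul_nonneg (Real.rpow_nonneg hRC1 _) (Real.rpow_nonneg hRC2 _))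
        (Real.rpow_nonneg hconv0 _)
    linarith
  · -- main case
    have hKB1 : K ⊆ Metric.closedBall (0:EuclideanSpace ℝ (Fin n)) 1 := fun x hx => hKB (subset_convexHull ℝ K hx)
    set e₀ : EuclideanSpace ℝ (Fin n) := EuclideanSpace.single (⟨0, hn⟩ : Fin n) (1:ℝ) with he₀def
    have he₀ : ‖e₀‖ = 1 := by rw [he₀def, EuclideanSpace.norm_single]; norm_num
    have hsb : ∀ r s : ℝ, 0 < r → r • Metric.closedBall (0:EuclideanSpace ℝ (Fin n)) s = Metric.closedBall 0 (r*s) := by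
      intro r s hr
      rw [smul_closedBall' hr.ne' (0:EuclideanSpace ℝ (Fin n)) s]
      simp [Real.norm_eq_abs, abs_of_pos hr]
    obtain ⟨ε, hε, hball⟩ : ∃ ε > 0, Metric.ball (0:EuclideanSpace ℝ (Fin n)) ε ⊆ K := by
      rw [mem_interior_iff_mem_nhds] at h0
      exact Metric.mem_nhds_iff.mp h0
    have hcb : Metric.closedBall (0:EuclideanSpace ℝ (Fin n)) (ε/2) ⊆ K :=
      (Metric.closedBall_subset_ball (by linarith)).trans hball
    set A : Set ℝ := {t : ℝ | 0 ≤ t ∧ Metric.closedBall (0:EuclideanSpace ℝ (Fin n)) t ⊆ K} with hAdef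
    have hAne : ε/2 ∈ A := ⟨by linarith, hcb⟩
    have hAbdd : BddAbove A := by
      refine ⟨1, fun t ht => ?_⟩
      obtain ⟨ht0, htK⟩ := ht
      have hmem : t • e₀ ∈ Metric.closedBall (0:EuclideanSpace ℝ (Fin n)) t := by
        rw [Metric.mem_closedBall, dist_zero_right, norm_smul, he₀, mul_one,
          Real.norm_eq_abs, abs_of_nonneg ht0]
      have := hKB1 (htK hmem)
      rw [Metric.mem_closedBall, dist_zero_right, norm_smul, he₀, mul_one,
        Real.norm_eq_abs, abs_of_nonneg ht0] at this
      exact this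
    set a : ℝ := sSup A with hadef
    have ha0 : 0 < a := lt_of_lt_of_le (by linarith) (le_csSup hAbdd hAne)
    have ha1 : a ≤ 1 := csSup_le ⟨_, hAne⟩ (fun t ht => by
      obtain ⟨ht0, htK⟩ := ht
      have hmem : t • e₀ ∈ Metric.closedBall (0:EuclideanSpace ℝ (Fin n)) t := by
        rw [Metric.mem_closedBall, dist_zero_right, norm_smul, he₀, mul_one,
          Real.norm_eq_abs, abs_of_nonneg ht0]
      have := hKB1 (htK hmem)
      rw [Metric.mem_closedBall, dist_zero_right, norm_smul, he₀, mul_one,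
        Real.norm_eq_abs, abs_of_nonneg ht0] at this
      exact this)
    have haK : Metric.closedBall (0:EuclideanSpace ℝ (Fin n)) a ⊆ K := by
      have hball' : Metric.ball (0:EuclideanSpace ℝ (Fin n)) a ⊆ K := by
        intro y hy
        rw [Metric.mem_ball, dist_zero_right] at hy
        obtain ⟨t, htA, hyt⟩ := exists_lt_of_lt_csSup ⟨_, hAne⟩ hy
        exact htA.2 (by rw [Metric.mem_closedBall, dist_zero_right]; exact hyt.le)
      rw [← closure_ball (0:EuclideanSpace ℝ (Fin n)) ha0.ne']
      calc closure (Metric.ball (0:EuclideanSpace ℝ (Fin n)) a) ⊆ closure K := closure_mono hball'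
        _ = K := hcomp.isClosed.closure_eq
    -- the distance D for the convex hull
    set SD : Set ℝ := {l : ℝ | 0 < l ∧ l⁻¹ • Metric.closedBall (0:EuclideanSpace ℝ (Fin n)) 1 ⊆ convexHull ℝ K ∧
        convexHull ℝ K ⊆ Metric.closedBall 0 1} with hSDdef
    have hSDne : a⁻¹ ∈ SD := by
      refine ⟨inv_pos.mpr ha0, ?_, hKB⟩
      rw [inv_inv, hsb a 1 ha0, mul_one]
      exact haK.trans (subset_convexHull ℝ K)
    have hSDlb : ∀ l ∈ SD, (1:ℝ) ≤ l := by
      rintro l ⟨hl, hsubl, _⟩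
      have he₀B : e₀ ∈ Metric.closedBall (0:EuclideanSpace ℝ (Fin n)) 1 := by
        rw [Metric.mem_closedBall, dist_zero_right, he₀]
      have h1 : l⁻¹ • e₀ ∈ l⁻¹ • Metric.closedBall (0:EuclideanSpace ℝ (Fin n)) 1 := Set.smul_mem_smul_set he₀B
      have h2 := hKB (hsubl h1)
      rw [Metric.mem_closedBall, dist_zero_right, norm_smul, he₀, mul_one,
        Real.norm_eq_abs, abs_of_pos (by positivity : (0:ℝ) < l⁻¹)] at h2
      nlinarith [mul_le_mul_of_nonneg_left h2 hl.le, mul_inv_cancel₀ hl.ne']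
    have hSDbdd : BddBelow SD := ⟨1, hSDlb⟩
    set D : ℝ := sInf SD with hDdef
    have hD1 : 1 ≤ D := le_csInf ⟨_, hSDne⟩ hSDlb
    -- the key quantities
    set L : ℝ := 1/((1-p)*Real.log 2) with hL
    set M : ℝ := (a ^ (-p) * L) ^ ((2:ℝ)/(2-p)) with hM
    set Ap : ℝ := 2 ^ (1-p) + (1-p) * 2 ^ (1-p/2) / p with hAp
    set θ : ℝ := (Ap * M ^ (1-p)) ^ (-(1:ℝ)/p) with hθ
    have hL1 : 1 ≤ L := by
      rw [hL, le_div_iff₀ (mul_pos h1p hlog2)]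
      nlinarith [Real.log_two_lt_d9]
    have hM1 : 1 ≤ M := by
      rw [hM]
      apply Real.one_le_rpow _ (div_nonneg (by norm_num) (by linarith))
      have hap1 : 1 ≤ a ^ (-p) :=
        Real.one_le_rpow_of_pos_of_le_one_of_nonpos ha0 ha1 (by linarith)
      nlinarith
    have hM0 : 0 < M := lt_of_lt_of_le one_pos hM1
    have hAp0 : 0 < Ap := by
      rw [hAp]
      have a1 : (0:ℝ) < 2 ^ (1-p) := Real.rpow_pos_of_pos two_pos _
      have a2 : (0:ℝ) ≤ (1-p) * 2 ^ (1-p/2) / p :=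
        div_nonneg (mul_nonneg h1p.le (Real.rpow_nonneg two_pos.le _)) hp0.le
      linarith
    have hθ0 : 0 < θ := by
      rw [hθ]
      exact Real.rpow_pos_of_pos (mul_pos hAp0 (Real.rpow_pos_of_pos hM0 _)) _
    set N : ℕ := Nat.ceil M with hN
    have hMN : M ≤ (N:ℝ) := Nat.le_ceil M
    have hNpos : 0 < N := Nat.ceil_pos.mpr (by linarith)
    have hNR : (0:ℝ) < (N:ℝ) := by exact_mod_cast hNpos
    have hNM : (N:ℝ) ≤ 2*M := by
      have := Nat.ceil_lt_add_one (by linarith : (0:ℝ) ≤ M)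
      have h2 : (N:ℝ) < M + 1 := this
      linarith
    -- absorption: θ • convexHull K ⊆ K
    have habs : ∀ x ∈ convexHull ℝ K, θ • x ∈ K := by
      intro x hx
      obtain ⟨N0, hN0⟩ : ∃ m, N = m + 1 := Nat.exists_eq_succ_of_ne_zero hNpos.ne'
      obtain ⟨f, hf, hbound⟩ := greedy hKB1 hx N0
      have hcast : ((N0 + 1 : ℕ) : ℝ) = (N:ℝ) := by rw [hN0]
      set avg : EuclideanSpace ℝ (Fin n) := ((N:ℝ))⁻¹ • (∑ i, f i) with havg
      have hbound' : ‖avg - x‖^2 ≤ 4/(N:ℝ) := by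
        rw [havg, ← hcast]
        exact hbound
      set e : EuclideanSpace ℝ (Fin n) := x - avg with he
      have her : ‖e‖ ≤ 2 * (N:ℝ) ^ (-(1:ℝ)/2) := by
        have h1 : ‖e‖^2 ≤ 4/(N:ℝ) := by rw [he, norm_sub_rev]; exact hbound'
        have hRpos : (0:ℝ) < 2 * (N:ℝ) ^ (-(1:ℝ)/2) := by
          have := Real.rpow_pos_of_pos hNR (-(1:ℝ)/2)
          linarith
        have h2 : (2 * (N:ℝ) ^ (-(1:ℝ)/2))^2 = 4/(N:ℝ) := by
          rw [mul_pow, ← Real.rpow_natCast ((N:ℝ) ^ (-(1:ℝ)/2)) 2,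
            ← Real.rpow_mul hNR.le]
          norm_num
          rw [Real.rpow_neg_one]
          ring
        calc ‖e‖ = Real.sqrt (‖e‖^2) := (Real.sqrt_sq (norm_nonneg e)).symm
          _ ≤ Real.sqrt ((2 * (N:ℝ) ^ (-(1:ℝ)/2))^2) := by
              apply Real.sqrt_le_sqrt; rw [h2]; exact h1
          _ = 2 * (N:ℝ) ^ (-(1:ℝ)/2) := Real.sqrt_sq hRpos.le
      -- the p-convex combination of the f i
      have hNp : ((N:ℝ) ^ (-(1:ℝ)/p)) ^ p = (N:ℝ)⁻¹ := by
        rw [← Real.rpow_mul hNR.le]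
        have : -(1:ℝ)/p * p = -1 := by field_simp
        rw [this, Real.rpow_neg_one]
      have hT : (∑ i : Fin (N0+1), ((N:ℝ) ^ (-(1:ℝ)/p)) • f i) ∈ K := by
        apply pcombN hp0 h0K hstar hpconv Finset.univ
          (fun _ : Fin (N0+1) => (N:ℝ) ^ (-(1:ℝ)/p)) f (fun i _ => hf i)
          (fun i _ => Real.rpow_nonneg hNR.le _)
        rw [Finset.sum_const, Finset.card_univ, Fintype.card_fin, hNp, nsmul_eq_mul]
        rw [← hcast]
        push_cast
        rw [mul_inv_cancel₀ (by positivity)]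
      set T : EuclideanSpace ℝ (Fin n) := ∑ i : Fin (N0+1), ((N:ℝ) ^ (-(1:ℝ)/p)) • f i with hTdef
      set lam : ℝ := θ * (N:ℝ) ^ ((1:ℝ)/p - 1) with hlam
      set mu : ℝ := θ * ‖e‖ / a with hmu
      have hid : θ • x = lam • T + θ • e := by
        have h1 : lam • T = θ • avg := by
          rw [hTdef, havg, Finset.smul_sum, Finset.smul_sum, Finset.smul_sum]
          apply Finset.sum_congr rfl
          intro i _
          rw [smul_smul, smul_smul]
          congr 1
          rw [hlam, mul_assoc, ← Real.rpow_add hNR]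
          have : (1:ℝ)/p - 1 + -(1:ℝ)/p = -1 := by field_simp; ring
          rw [this, Real.rpow_neg_one]
        rw [h1, ← smul_add, he]
        congr 1
        abel
      have hKI : lam ^ p + mu ^ p ≤ 1 := by
        rw [hlam, hmu]
        exact key_ineq p a ‖e‖ L M Ap θ N hp0 hp1 ha0 ha1 (norm_nonneg e)
          hL hM hAp hθ hMN hNM her
      have hlam0 : 0 ≤ lam := by
        rw [hlam]
        exact mul_nonneg hθ0.le (Real.rpow_nonneg hNR.le _)
      have hmu0 : 0 ≤ mu := by
        rw [hmu]
        exact div_nonneg (mul_nonneg hθ0.le (norm_nonneg e)) ha0.le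
      by_cases he0 : e = 0
      · have hlam1 : lam ≤ 1 := by
          by_contra hgt
          push_neg at hgt
          have h1 : 1 < lam ^ p := by
            rw [Real.one_lt_rpow_iff (by linarith)]
            exact Or.inl ⟨hgt, hp0⟩
          nlinarith [Real.rpow_nonneg hmu0 p]
        rw [hid, he0, smul_zero, add_zero]
        exact hstar T hT lam ⟨hlam0, hlam1⟩
      · have hepos : 0 < ‖e‖ := norm_pos_iff.mpr he0
        set b : EuclideanSpace ℝ (Fin n) := (a/‖e‖) • e with hb
        have hbK : b ∈ K := by
          apply haK
          rw [Metric.mem_closedBall, dist_zero_right, hb, norm_smul,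
            Real.norm_eq_abs, abs_of_pos (by positivity), div_mul_cancel₀ _ hepos.ne']
        have hmub : mu • b = θ • e := by
          rw [hb, hmu, smul_smul]
          congr 1
          field_simp
        rw [hid, ← hmub]
        exact pc2 hp0 hstar hpconv hT hbK hlam0 hmu0 hKI
    -- θ/D ≤ a, i.e. θ ≤ a * D
    have hKabs : θ • convexHull ℝ K ⊆ K := by
      rintro _ ⟨y, hy, rfl⟩
      exact habs y hy
    have hθD : θ ≤ a * D := by
      have h3 : ∀ l ∈ SD, θ/a ≤ l := by
        rintro l ⟨hl0, hsubl, _⟩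
        have h1 : θ / l ∈ A := by
          constructor
          · exact (div_pos hθ0 hl0).le
          · have heq : Metric.closedBall (0:EuclideanSpace ℝ (Fin n)) (θ/l) = θ • (l⁻¹ • Metric.closedBall (0:EuclideanSpace ℝ (Fin n)) 1) := by
              rw [hsb l⁻¹ 1 (by positivity), mul_one, hsb θ l⁻¹ hθ0, div_eq_mul_inv]
            rw [heq]
            exact (Set.smul_set_mono hsubl).trans hKabs
        have h2 : θ / l ≤ a := le_csSup hAbdd h1
        rw [div_le_iff₀ hl0] at h2
        rw [div_le_iff₀ ha0]
        nlinarith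
      have h4 : θ/a ≤ D := le_csInf ⟨_, hSDne⟩ h3
      rw [div_le_iff₀ ha0] at h4
      nlinarith
    -- conclude with the numeric lemma
    have hfin : a⁻¹ ≤ Ap ^ ((2 - p) / p ^ 2) * L ^ ((2 - 2 * p) / p ^ 2) * D ^ (2 / p - 1) := by
      rw [hAp, hL]
      apply final_numeric p a D hp0 hp1 ha0 hD1
      rw [← hL, ← hM, ← hAp, ← hθ]
      exact hθD
    have hd1K : d1 K (Metric.closedBall 0 1) ≤ a⁻¹ := by
      apply csInf_le ⟨0, fun l hl => hl.1.le⟩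
      refine ⟨inv_pos.mpr ha0, ?_, hKB1⟩
      rw [inv_inv, hsb a 1 ha0, mul_one]
      exact haK
    have hDd1 : d1 (convexHull ℝ K) (Metric.closedBall 0 1) = D := rfl
    rw [hDd1]
    calc d1 K (Metric.closedBall 0 1) ≤ a⁻¹ := hd1K
      _ ≤ _ := hfin
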